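/- Let Γ be a Blackwell game with finitely many players, finite action sets, and bounded, Borel-measurable, tail-measurable payoff functions, and let ε > 0. If there exists a play p* ∈ A^ℕ such that f_i(p*) > v̄_i − ε for every player i ∈ I, then Γ admits an ε-equilibrium. -/

import Mathlib

set_option linter.unusedSectionVars false
set_option linter.unnecessarySimpa false
set_option linter.unusedVariables false


open MeasureTheory

namespace Blackwell

/-- The set of plays: infinite streams of action profiles. -/
abbrev Play {ι : Type*} (Ac : ι → Type*) : Type _ := ℕ → ∀ j, Ac j

/-- A behavior strategy of player `i`: a mixed action after every finite history.
A history of length `t` is encoded by the first `t` coordinates of a play, and the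
strategy is required to depend only on these coordinates. -/
structure Strategy {ι : Type*} (Ac : ι → Type*) (i : ι) where
  act : ℕ → Play Ac → PMF (Ac i)
  depends_on_past : ∀ (t : ℕ) (p q : Play Ac), (∀ s, s < t → p s = q s) → act t p = act t q

/-- A strategy profile: a behavior strategy for every player. -/
abbrev Profile {ι : Type*} (Ac : ι → Type*) : Type _ := ∀ i, Strategy Ac i

/-- The assignment, to each strategy profile `σ`, of the induced (Ionescu–Tulcea)
probability measure `P_σ` on the set of plays; it is uniquely characterized by the
probabilities it assigns to cylinder sets. -/
structure PlayMeasure {ι : Type*} [Fintype ι] (Ac : ι → Type*)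
    [∀ i, MeasurableSpace (Ac i)] where
  μ : Profile Ac → Measure (Play Ac)
  isProb : ∀ σ, IsProbabilityMeasure (μ σ)
  cyl : ∀ (σ : Profile Ac) (n : ℕ) (p : Play Ac),
    μ σ {q | ∀ t, t < n → q t = p t}
      = ∏ t ∈ Finset.range n, ∏ i, ((σ i).act t p) (p t i)

variable {ι : Type*} [Fintype ι] [DecidableEq ι] [Nonempty ι]
  {Ac : ι → Type*} [∀ i, Fintype (Ac i)] [∀ i, Nonempty (Ac i)]
  [∀ i, MeasurableSpace (Ac i)] [∀ i, DiscreteMeasurableSpace (Ac i)]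

/-- The expected payoff `E_σ[f]` of a strategy profile `σ` for payoff function `f`. -/
noncomputable def expPay (PM : PlayMeasure Ac) (σ : Profile Ac) (f : Play Ac → ℝ) : ℝ :=
  ∫ p, f p ∂(PM.μ σ)

/-- Concatenation of the history given by the first `n` coordinates of `h` with the play `q`. -/
def splice (n : ℕ) (h q : Play Ac) : Play Ac := fun t => if t < n then h t else q (t - n)

/-- The continuation of a strategy in the subgame that starts at the history
given by the first `n` coordinates of `h`. -/
def Strategy.shift {i : ι} (σi : Strategy Ac i) (n : ℕ) (h : Play Ac) : Strategy Ac i where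
  act t q := σi.act (n + t) (splice n h q)
  depends_on_past := by
    intro t p q hpq
    refine σi.depends_on_past _ _ _ ?_
    intro s hs
    simp only [splice]
    by_cases hsn : s < n
    · simp [hsn]
    · simp only [if_neg hsn]
      exact hpq (s - n) (by omega)

/-- The expected payoff `E_σ[f ∣ h]` in the subgame that starts at the history
given by the first `n` coordinates of `h`. -/
noncomputable def subExp (PM : PlayMeasure Ac) (σ : Profile Ac) (f : Play Ac → ℝ)
    (n : ℕ) (h : Play Ac) : ℝ :=
  ∫ q, f (splice n h q) ∂(PM.μ (fun i => (σ i).shift n h))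

/-- The minmax value of player `i`. -/
noncomputable def minmax (PM : PlayMeasure Ac) (f : Play Ac → ℝ) (i : ι) : ℝ :=
  ⨅ τ : Profile Ac, ⨆ σi : Strategy Ac i, expPay PM (Function.update τ i σi) f

/-- The maxmin value of player `i`. -/
noncomputable def maxmin (PM : PlayMeasure Ac) (f : Play Ac → ℝ) (i : ι) : ℝ :=
  ⨆ σi : Strategy Ac i, ⨅ τ : Profile Ac, expPay PM (Function.update τ i σi) f

/-- The minmax value of player `i` in the subgame that starts at the history
given by the first `n` coordinates of `h`. -/
noncomputable def subMinmax (PM : PlayMeasure Ac) (f : Play Ac → ℝ) (i : ι)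
    (n : ℕ) (h : Play Ac) : ℝ :=
  ⨅ τ : Profile Ac, ⨆ σi : Strategy Ac i, subExp PM (Function.update τ i σi) f n h

/-- The maxmin value of player `i` in the subgame that starts at the history
given by the first `n` coordinates of `h`. -/
noncomputable def subMaxmin (PM : PlayMeasure Ac) (f : Play Ac → ℝ) (i : ι)
    (n : ℕ) (h : Play Ac) : ℝ :=
  ⨆ σi : Strategy Ac i, ⨅ τ : Profile Ac, subExp PM (Function.update τ i σi) f n h

/-- A strategy profile `σ` is an `ε`-equilibrium if no player can gain more than `ε`
by a unilateral deviation. -/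
def IsEpsEquilibrium (PM : PlayMeasure Ac) (f : ι → Play Ac → ℝ) (ε : ℝ)
    (σ : Profile Ac) : Prop :=
  ∀ (i : ι) (σi : Strategy Ac i),
    expPay PM (Function.update σ i σi) (f i) ≤ expPay PM σ (f i) + ε

/-- A payoff function is tail-measurable if changing finitely many coordinates of the
play does not change its value. -/
def TailMeasurable (f : Play Ac → ℝ) : Prop :=
  ∀ p q : Play Ac, (∃ N, ∀ t, N ≤ t → p t = q t) → f p = f q

/-- A payoff function is bounded. -/
def BddPayoff (f : Play Ac → ℝ) : Prop := ∃ C, ∀ p, |f p| ≤ C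

/- ===================== auxiliary development ===================== -/

instance {i : ι} : Nonempty (Strategy Ac i) :=
  ⟨⟨fun _ _ => PMF.pure (Classical.arbitrary _), fun _ _ _ _ => rfl⟩⟩

theorem Strategy.ext' {i : ι} {σ τ : Strategy Ac i} (h : σ.act = τ.act) : σ = τ := by
  cases σ; cases τ; simpa using h

@[simp] theorem splice_lt {n t : ℕ} (ht : t < n) (h q : Play Ac) : splice n h q t = h t :=
  if_pos ht

@[simp] theorem splice_ge {n t : ℕ} (ht : n ≤ t) (h q : Play Ac) :
    splice n h q t = q (t - n) := if_neg (by omega)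

theorem splice_congr {n : ℕ} {h h' : Play Ac} (hh : ∀ t, t < n → h t = h' t) :
    (splice n h : Play Ac → Play Ac) = splice n h' := by
  funext q t
  by_cases ht : t < n
  · simp [splice, ht, hh t ht]
  · simp [splice, ht]

theorem splice_splice (n m : ℕ) (h h' q : Play Ac) :
    splice n h (splice m h' q) = splice (n + m) (splice n h h') q := by
  funext t
  rcases lt_or_ge t n with ht | ht
  · have h2 : t < n + m := by omega
    simp [splice, ht, h2]
  · rcases lt_or_ge t (n + m) with ht2 | ht2
    · simp [splice, show ¬ t < n by omega, show t - n < m by omega, ht2]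
    · simp [splice, show ¬ t < n by omega, show ¬ t - n < m by omega,
        show ¬ t < n + m by omega, show t - n - m = t - (n + m) by omega]

theorem Strategy.shift_act {i : ι} (σi : Strategy Ac i) (n : ℕ) (h : Play Ac) (t : ℕ)
    (q : Play Ac) : (σi.shift n h).act t q = σi.act (n + t) (splice n h q) := rfl

theorem Strategy.shift_congr {i : ι} (σi : Strategy Ac i) {n : ℕ} {h h' : Play Ac}
    (hh : ∀ t, t < n → h t = h' t) : σi.shift n h = σi.shift n h' := by
  apply Strategy.ext'
  funext t q
  show σi.act (n + t) (splice n h q) = σi.act (n + t) (splice n h' q)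
  rw [splice_congr hh]

theorem Strategy.shift_shift {i : ι} (σi : Strategy Ac i) (n m : ℕ) (h h' : Play Ac) :
    (σi.shift n h).shift m h' = σi.shift (n + m) (splice n h h') := by
  apply Strategy.ext'
  funext t q
  show σi.act (n + (m + t)) (splice n h (splice m h' q))
      = σi.act (n + m + t) (splice (n + m) (splice n h h') q)
  rw [splice_splice]
  congr 1
  omega

theorem measurable_splice (n : ℕ) (h : Play Ac) :
    Measurable (splice n h : Play Ac → Play Ac) := by
  apply measurable_pi_lambda
  intro t
  by_cases ht : t < n
  · simpa [splice, ht] using measurable_const (a := h t)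
  · simpa [splice, ht] using measurable_pi_apply (t - n)

/-- cylinder sets -/
def cylSet (n : ℕ) (p : Play Ac) : Set (Play Ac) := {q | ∀ t, t < n → q t = p t}

theorem cylSet_congr {n : ℕ} {p p' : Play Ac} (h : ∀ t, t < n → p t = p' t) :
    (cylSet n p : Set (Play Ac)) = cylSet n p' := by
  ext q
  constructor <;> intro hq t ht
  · rw [hq t ht, h t ht]
  · rw [hq t ht, h t ht]

theorem mem_cylSet_splice {n m : ℕ} {h q r : Play Ac} :
    splice n h q ∈ (cylSet m r : Set (Play Ac)) ↔
      (∀ t, t < min m n → h t = r t) ∧ (∀ s, s < m - n → q s = r (n + s)) := by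
  constructor
  · intro hs
    constructor
    · intro t ht
      have := hs t (by omega)
      rwa [splice_lt (by omega)] at this
    · intro s hsm
      have := hs (n + s) (by omega)
      rw [splice_ge (by omega)] at this
      simpa using this
  · rintro ⟨h1, h2⟩ t ht
    by_cases htn : t < n
    · rw [splice_lt htn]; exact h1 t (by omega)
    · rw [splice_ge (by omega)]
      have := h2 (t - n) (by omega)
      rwa [show n + (t - n) = t by omega] at this

theorem measurableSet_cylSet (n : ℕ) (p : Play Ac) :
    MeasurableSet (cylSet n p : Set (Play Ac)) := by
  have : (cylSet n p : Set (Play Ac)) =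
      ⋂ t ∈ Finset.range n, (fun q : Play Ac => q t) ⁻¹' {p t} := by
    ext q; simp [cylSet]
  rw [this]
  exact MeasurableSet.biInter (Finset.range n).countable_toSet
    (fun t _ => measurable_pi_apply t (MeasurableSet.singleton (p t)))

section MeasureExt

theorem generateFrom_cylSet :
    (inferInstance : MeasurableSpace (Play Ac)) =
      MeasurableSpace.generateFrom {s : Set (Play Ac) | ∃ n p, s = cylSet n p} := by
  refine le_antisymm ?_ (MeasurableSpace.generateFrom_le ?_)
  · have key : ∀ t : ℕ, @Measurable (Play Ac) (∀ j, Ac j)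
        (MeasurableSpace.generateFrom {s : Set (Play Ac) | ∃ n p, s = cylSet n p}) _
        (fun q => q t) := ?_
    · exact iSup_le fun t => measurable_iff_comap_le.1 (key t)
    intro t
    refine @measurable_to_countable' (∀ j, Ac j) (Play Ac) _ _
      (MeasurableSpace.generateFrom {s : Set (Play Ac) | ∃ n p, s = cylSet n p}) _
      fun a => ?_
    have : ((fun q : Play Ac => q t) ⁻¹' {a}) =
        ⋃ v : Fin t → (∀ j, Ac j),
          cylSet (t + 1) (fun s => if hs : s < t then v ⟨s, hs⟩ else a) := by
      ext q
      simp only [Set.mem_preimage, Set.mem_singleton_iff, Set.mem_iUnion]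
      constructor
      · intro hq
        refine ⟨fun s => q s, fun s hs => ?_⟩
        by_cases hst : s < t
        · simp [hst]
        · have : s = t := by omega
          simp [this, hq]
      · rintro ⟨v, hv⟩
        have := hv t (by omega)
        simpa using this
    rw [this]
    exact MeasurableSet.iUnion fun v =>
      MeasurableSpace.measurableSet_generateFrom ⟨t + 1, _, rfl⟩
  · rintro s ⟨n, p, rfl⟩
    exact measurableSet_cylSet n p

theorem isPiSystem_cylSet :
    IsPiSystem {s : Set (Play Ac) | ∃ n p, s = cylSet n p} := by
  rintro _ ⟨n, p, rfl⟩ _ ⟨m, r, rfl⟩ ⟨q, hq1, hq2⟩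
  rcases le_total n m with hnm | hnm
  · refine ⟨m, r, ?_⟩
    apply Set.eq_of_subset_of_subset (Set.inter_subset_right)
    intro x hx
    refine ⟨fun t ht => ?_, hx⟩
    rw [hx t (by omega), ← hq2 t (by omega), hq1 t ht]
  · refine ⟨n, p, ?_⟩
    apply Set.eq_of_subset_of_subset (Set.inter_subset_left)
    intro x hx
    refine ⟨hx, fun t ht => ?_⟩
    rw [hx t (by omega), ← hq1 t (by omega), hq2 t ht]

theorem measure_ext_cyl {μ ν : Measure (Play Ac)} [IsProbabilityMeasure μ]
    [IsProbabilityMeasure ν] (h : ∀ n p, μ (cylSet n p) = ν (cylSet n p)) : μ = ν := by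
  refine MeasureTheory.ext_of_generate_finite _ generateFrom_cylSet isPiSystem_cylSet ?_ ?_
  · rintro s ⟨n, p, rfl⟩; exact h n p
  · simp

end MeasureExt

section Tower

theorem cyl_measure (PM : PlayMeasure Ac) (σ : Profile Ac) (n : ℕ) (p : Play Ac) :
    PM.μ σ (cylSet n p) = ∏ t ∈ Finset.range n, ∏ i, ((σ i).act t p) (p t i) :=
  PM.cyl σ n p

/-- extension of a finite history to a play -/
noncomputable def extendH (n : ℕ) (h : Fin n → ∀ j, Ac j) : Play Ac :=
  fun t => if ht : t < n then h ⟨t, ht⟩ else Classical.arbitrary _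

theorem extendH_lt {n t : ℕ} (ht : t < n) (h : Fin n → ∀ j, Ac j) :
    extendH n h t = h ⟨t, ht⟩ := dif_pos ht

theorem mem_cylSet_extendH {n : ℕ} {h : Fin n → ∀ j, Ac j} {q : Play Ac} :
    q ∈ (cylSet n (extendH n h) : Set (Play Ac)) ↔ ∀ s : Fin n, q s.1 = h s := by
  constructor
  · intro hq s
    rw [hq s.1 s.2, extendH_lt s.2]
  · intro hq t ht
    rw [extendH_lt ht]
    exact hq ⟨t, ht⟩

theorem sum_measure_inter (μ : Measure (Play Ac)) (n : ℕ) {s : Set (Play Ac)}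
    (hs : MeasurableSet s) :
    μ s = ∑ h : Fin n → (∀ j, Ac j), μ (s ∩ cylSet n (extendH n h)) := by
  have hcover : (⋃ h : Fin n → (∀ j, Ac j), s ∩ cylSet n (extendH n h)) = s := by
    ext q
    simp only [Set.mem_iUnion, Set.mem_inter_iff]
    constructor
    · rintro ⟨h, hq, -⟩; exact hq
    · intro hq
      exact ⟨fun t => q t.1, hq, mem_cylSet_extendH.2 fun t => rfl⟩
  have hdisj : Pairwise (Function.onFun Disjoint
      fun h : Fin n → (∀ j, Ac j) => s ∩ cylSet n (extendH n h)) := by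
    intro h h' hne
    refine Set.disjoint_left.2 fun q hq hq' => hne (funext fun t => ?_)
    rw [← mem_cylSet_extendH.1 hq.2 t, ← mem_cylSet_extendH.1 hq'.2 t]
  calc μ s = μ (⋃ h : Fin n → (∀ j, Ac j), s ∩ cylSet n (extendH n h)) := by rw [hcover]
    _ = ∑' h : Fin n → (∀ j, Ac j), μ (s ∩ cylSet n (extendH n h)) :=
        measure_iUnion hdisj fun h => hs.inter (measurableSet_cylSet _ _)
    _ = ∑ h : Fin n → (∀ j, Ac j), μ (s ∩ cylSet n (extendH n h)) := tsum_fintype _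

/-- The shifted profile. -/
noncomputable def shiftP (σ : Profile Ac) (n : ℕ) (h : Play Ac) : Profile Ac :=
  fun i => (σ i).shift n h

/-- Tower identity for the measure. -/
theorem measure_eq_sum (PM : PlayMeasure Ac) (σ : Profile Ac) (n : ℕ) :
    PM.μ σ = ∑ h : Fin n → (∀ j, Ac j),
      PM.μ σ (cylSet n (extendH n h)) •
        Measure.map (splice n (extendH n h)) (PM.μ (shiftP σ n (extendH n h))) := by
  haveI := PM.isProb σ
  have happ : ∀ (m : ℕ) (r : Play Ac),
      (∑ h : Fin n → (∀ j, Ac j),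
        PM.μ σ (cylSet n (extendH n h)) •
          Measure.map (splice n (extendH n h)) (PM.μ (shiftP σ n (extendH n h))))
        (cylSet m r)
      = ∑ h : Fin n → (∀ j, Ac j),
          PM.μ σ (cylSet n (extendH n h)) *
            (PM.μ (shiftP σ n (extendH n h)))
              (splice n (extendH n h) ⁻¹' cylSet m r) := by
    intro m r
    rw [Measure.finset_sum_apply]
    refine Finset.sum_congr rfl fun h _ => ?_
    rw [Measure.smul_apply,
      Measure.map_apply (measurable_splice n (extendH n h)) (measurableSet_cylSet m r)]
    rfl
  have key : ∀ (m : ℕ) (r : Play Ac),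
      (∑ h : Fin n → (∀ j, Ac j),
        PM.μ σ (cylSet n (extendH n h)) •
          Measure.map (splice n (extendH n h)) (PM.μ (shiftP σ n (extendH n h))))
        (cylSet m r) = PM.μ σ (cylSet m r) := by
    intro m r
    rw [happ]
    rcases le_or_gt m n with hmn | hmn
    · -- short cylinder: agreement is decided by the history
      rw [sum_measure_inter (PM.μ σ) n (measurableSet_cylSet m r)]
      refine Finset.sum_congr rfl fun h _ => ?_
      haveI := PM.isProb (shiftP σ n (extendH n h))
      by_cases hagree : ∀ t, t < m → extendH n h t = r t
      · have hpre : splice n (extendH n h) ⁻¹' cylSet m r = Set.univ := by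
          ext q
          simp only [Set.mem_preimage, Set.mem_univ, iff_true]
          rw [show (cylSet m r : Set (Play Ac)) = {q | ∀ t, t < m → q t = r t} from rfl]
          exact mem_cylSet_splice.2
            ⟨fun t ht => hagree t (lt_of_lt_of_le ht (min_le_left m n)),
             fun s hs => absurd hs (by omega)⟩
        have hint : (cylSet m r : Set (Play Ac)) ∩ cylSet n (extendH n h)
            = cylSet n (extendH n h) := by
          apply Set.inter_eq_self_of_subset_right
          intro x hx t ht
          rw [hx t (by omega), hagree t ht]
        rw [hpre, hint, measure_univ, mul_one]
      · push_neg at hagree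
        obtain ⟨t, ht, hne⟩ := hagree
        have hpre : splice n (extendH n h) ⁻¹' cylSet m r = ∅ := by
          ext q
          simp only [Set.mem_preimage, Set.mem_empty_iff_false, iff_false]
          intro hq
          exact hne ((mem_cylSet_splice.1 hq).1 t (lt_min ht (lt_of_lt_of_le ht hmn)))
        have hint : (cylSet m r : Set (Play Ac)) ∩ cylSet n (extendH n h) = ∅ := by
          ext x
          simp only [Set.mem_inter_iff, Set.mem_empty_iff_false, iff_false]
          rintro ⟨hx1, hx2⟩
          exact hne ((hx2 t (lt_of_lt_of_le ht hmn)).symm.trans (hx1 t ht))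
        rw [hpre, hint]
        simp
    · -- long cylinder
      set hr : Fin n → (∀ j, Ac j) := fun s => r s.1 with hhr
      have hextr : ∀ t, t < n → extendH n hr t = r t := fun t ht => extendH_lt ht _
      rw [Finset.sum_eq_single hr]
      · -- main term
        have hsplice : splice n (extendH n hr) (fun s => r (n + s)) = r := by
          funext t
          rcases lt_or_ge t n with ht | ht
          · rw [splice_lt ht, hextr t ht]
          · have htn : n + (t - n) = t := by omega
            rw [splice_ge ht]
            show r (n + (t - n)) = r t
            rw [htn]
        have hpre : splice n (extendH n hr) ⁻¹' cylSet m r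
            = cylSet (m - n) (fun s => r (n + s)) := by
          ext q
          simp only [Set.mem_preimage]
          constructor
          · intro hq
            exact fun s hs => (mem_cylSet_splice.1 hq).2 s hs
          · intro hq
            exact mem_cylSet_splice.2
              ⟨fun t ht => hextr t (lt_of_lt_of_le ht (min_le_right m n)), hq⟩
        have hμh : PM.μ (shiftP σ n (extendH n hr)) (cylSet (m - n) (fun s => r (n + s)))
            = ∏ s ∈ Finset.range (m - n), ∏ i, ((σ i).act (n + s) r) (r (n + s) i) := by
          rw [cyl_measure]
          refine Finset.prod_congr rfl fun s _ => Finset.prod_congr rfl fun i _ => ?_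
          show ((σ i).act (n + s) (splice n (extendH n hr) fun u => r (n + u))) _ = _
          rw [hsplice]
        have hch : PM.μ σ (cylSet n (extendH n hr))
            = ∏ t ∈ Finset.range n, ∏ i, ((σ i).act t r) (r t i) := by
          rw [cyl_measure]
          refine Finset.prod_congr rfl fun t ht => ?_
          rw [Finset.mem_range] at ht
          have hact : ∀ i, (σ i).act t (extendH n hr) = (σ i).act t r :=
            fun i => (σ i).depends_on_past t _ _ (fun s hs => hextr s (by omega))
          refine Finset.prod_congr rfl fun i _ => ?_
          rw [hact i, hextr t ht]
        have hsum := Finset.prod_range_add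
          (fun t => ∏ i, ((σ i).act t r) (r t i)) n (m - n)
        rw [show n + (m - n) = m by omega] at hsum
        rw [hpre, hμh, hch, cyl_measure PM σ m r]
        exact hsum.symm
      · intro h _ hne
        have : ∃ s : Fin n, h s ≠ hr s := by
          by_contra hc
          push_neg at hc
          exact hne (funext hc)
        obtain ⟨s, hs⟩ := this
        have hpre : splice n (extendH n h) ⁻¹' cylSet m r = ∅ := by
          ext q
          simp only [Set.mem_preimage, Set.mem_empty_iff_false, iff_false]
          intro hq
          have := (mem_cylSet_splice.1 hq).1 s.1 (lt_min (s.2.trans hmn) s.2)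
          rw [extendH_lt s.2] at this
          exact hs this
        rw [hpre, measure_empty, mul_zero]
      · intro hmem
        exact absurd (Finset.mem_univ hr) hmem
  -- conclude by uniqueness
  haveI : IsProbabilityMeasure (∑ h : Fin n → (∀ j, Ac j),
      PM.μ σ (cylSet n (extendH n h)) •
        Measure.map (splice n (extendH n h)) (PM.μ (shiftP σ n (extendH n h)))) := by
    constructor
    have := key 0 (Classical.arbitrary _)
    have huniv : (cylSet 0 (Classical.arbitrary _) : Set (Play Ac)) = Set.univ := by
      ext q; simp [cylSet]
    rw [huniv] at this
    rw [this, measure_univ]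
  exact measure_ext_cyl fun m r => (key m r).symm

end Tower

section IntTower

theorem integrable_bdd (μ : Measure (Play Ac)) [IsFiniteMeasure μ] {F : Play Ac → ℝ}
    (hF : Measurable F) {C : ℝ} (hC : ∀ p, |F p| ≤ C) : Integrable F μ :=
  (integrable_const C).mono' hF.aestronglyMeasurable
    (Filter.Eventually.of_forall fun p => by simpa using hC p)

theorem abs_integral_le_bdd (μ : Measure (Play Ac)) [IsProbabilityMeasure μ]
    {F : Play Ac → ℝ} {C : ℝ} (hC : ∀ p, |F p| ≤ C) : |∫ p, F p ∂μ| ≤ C := by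
  have := norm_integral_le_of_norm_le_const (μ := μ) (f := F) (C := C)
    (Filter.Eventually.of_forall fun p => by simpa using hC p)
  simpa using this

/-- Tower identity for integrals of bounded measurable functions. -/
theorem tower_integral (PM : PlayMeasure Ac) (σ : Profile Ac) (n : ℕ) {F : Play Ac → ℝ}
    (hF : Measurable F) {C : ℝ} (hC : ∀ p, |F p| ≤ C) :
    ∫ p, F p ∂ PM.μ σ
      = ∑ h : Fin n → (∀ j, Ac j), (PM.μ σ (cylSet n (extendH n h))).toReal *
          ∫ q, F (splice n (extendH n h) q) ∂ PM.μ (shiftP σ n (extendH n h)) := by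
  haveI := PM.isProb σ
  have hfin : ∀ h : Fin n → (∀ j, Ac j), IsFiniteMeasure
      (PM.μ σ (cylSet n (extendH n h)) •
        Measure.map (splice n (extendH n h)) (PM.μ (shiftP σ n (extendH n h)))) := by
    intro h
    haveI := PM.isProb (shiftP σ n (extendH n h))
    constructor
    rw [Measure.smul_apply,
      Measure.map_apply (measurable_splice _ _) MeasurableSet.univ]
    simp only [Set.preimage_univ, measure_univ, smul_eq_mul, mul_one]
    exact measure_lt_top _ _
  have hint : ∀ h ∈ (Finset.univ : Finset (Fin n → ∀ j, Ac j)), Integrable F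
      (PM.μ σ (cylSet n (extendH n h)) •
        Measure.map (splice n (extendH n h)) (PM.μ (shiftP σ n (extendH n h)))) := by
    intro h _
    haveI := hfin h
    exact integrable_bdd _ hF hC
  conv_lhs => rw [measure_eq_sum PM σ n]
  rw [integral_finset_sum_measure hint]
  refine Finset.sum_congr rfl fun h _ => ?_
  haveI := PM.isProb (shiftP σ n (extendH n h))
  rw [integral_smul_measure,
    integral_map (measurable_splice n (extendH n h)).aemeasurable
      (hF.aestronglyMeasurable.mono_ac (Measure.absolutelyContinuous_refl _))]
  rfl

/-- Tower identity for set integrals over a cylinder. -/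
theorem tower_setIntegral (PM : PlayMeasure Ac) (σ : Profile Ac) (n : ℕ) (p : Play Ac)
    {F : Play Ac → ℝ} (hF : Measurable F) {C : ℝ} (hC : ∀ q, |F q| ≤ C) :
    ∫ q in cylSet n p, F q ∂ PM.μ σ
      = (PM.μ σ (cylSet n p)).toReal * ∫ q, F (splice n p q) ∂ PM.μ (shiftP σ n p) := by
  have hC0 : 0 ≤ C := le_trans (abs_nonneg _) (hC (Classical.arbitrary _))
  set G : Play Ac → ℝ := (cylSet n p).indicator F with hG
  have hGmeas : Measurable G := hF.indicator (measurableSet_cylSet n p)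
  have hGbdd : ∀ q, |G q| ≤ C := by
    intro q
    by_cases hq : q ∈ (cylSet n p : Set (Play Ac))
    · rw [hG, Set.indicator_of_mem hq]; exact hC q
    · rw [hG, Set.indicator_of_notMem hq]; simpa using hC0
  have h1 : ∫ q in cylSet n p, F q ∂ PM.μ σ = ∫ q, G q ∂ PM.μ σ :=
    (integral_indicator (measurableSet_cylSet n p)).symm
  rw [h1, tower_integral PM σ n hGmeas hGbdd]
  rw [Finset.sum_eq_single (fun s : Fin n => p s.1)]
  · have hagree : ∀ t, t < n → extendH n (fun s : Fin n => p s.1) t = p t :=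
      fun t ht => extendH_lt ht _
    have hmem : ∀ q : Play Ac, splice n (extendH n (fun s : Fin n => p s.1)) q
        ∈ (cylSet n p : Set (Play Ac)) := by
      intro q
      exact mem_cylSet_splice.2
        ⟨fun t ht => hagree t (lt_of_lt_of_le ht (min_le_left n n)),
         fun s hs => absurd hs (by omega)⟩
    have e1 : (cylSet n (extendH n (fun s : Fin n => p s.1)) : Set (Play Ac))
        = cylSet n p := cylSet_congr hagree
    have e2 : (splice n (extendH n (fun s : Fin n => p s.1)) : Play Ac → Play Ac)
        = splice n p := splice_congr hagree
    have e3 : shiftP σ n (extendH n (fun s : Fin n => p s.1)) = shiftP σ n p :=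
      funext fun i => Strategy.shift_congr _ hagree
    have e4 : ∀ q, G (splice n (extendH n (fun s : Fin n => p s.1)) q)
        = F (splice n p q) := by
      intro q
      rw [hG, Set.indicator_of_mem (hmem q), e2]
    simp only [e1, e3, e4]
  · intro h _ hne
    have : ∃ s : Fin n, h s ≠ p s.1 := by
      by_contra hc
      push_neg at hc
      exact hne (funext hc)
    obtain ⟨s, hs⟩ := this
    have : ∀ q, G (splice n (extendH n h) q) = 0 := by
      intro q
      rw [hG, Set.indicator_of_notMem]
      intro hmem
      have := (mem_cylSet_splice.1 hmem).1 s.1 (lt_min s.2 s.2)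
      rw [extendH_lt s.2] at this
      exact hs this
    simp only [this, integral_zero, mul_zero]
  · intro hmem
    exact absurd (Finset.mem_univ _) hmem

end IntTower

section Punish

theorem tailF_splice {F : Play Ac → ℝ} (hFt : TailMeasurable F) (n : ℕ) (h h' q : Play Ac) :
    F (splice n h q) = F (splice n h' q) :=
  hFt _ _ ⟨n, fun t ht => by rw [splice_ge ht, splice_ge ht]⟩

/-- Play a fixed pure action for `n` steps, then continue with a strategy
depending on the observed length-`n` history. -/
noncomputable def Strategy.graft {i : ι} (n : ℕ) (base : ℕ → Ac i)
    (g : (Fin n → ∀ j, Ac j) → Strategy Ac i) : Strategy Ac i where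
  act t q := if t < n then PMF.pure (base t)
    else (g fun s : Fin n => q s.1).act (t - n) fun s => q (n + s)
  depends_on_past := by
    intro t p q hpq
    by_cases ht : t < n
    · simp [ht]
    · have h1 : (fun s : Fin n => p s.1) = fun s : Fin n => q s.1 :=
        funext fun s => hpq s.1 (by omega)
      simp only [if_neg ht]
      rw [h1]
      exact (g _).depends_on_past (t - n) _ _ fun s hs => hpq (n + s) (by omega)

theorem Strategy.graft_shift {i : ι} (n : ℕ) (base : ℕ → Ac i)
    (g : (Fin n → ∀ j, Ac j) → Strategy Ac i) (h : Fin n → ∀ j, Ac j) :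
    (Strategy.graft n base g).shift n (extendH n h) = g h := by
  apply Strategy.ext'
  funext s q
  have h1 : ¬ n + s < n := by omega
  have h2 : (fun s' : Fin n => splice n (extendH n h) q s'.1) = h := by
    funext s'
    rw [splice_lt s'.2, extendH_lt s'.2]
  have h3 : (fun s' => splice n (extendH n h) q (n + s')) = q := by
    funext s'
    have e : n + s' - n = s' := by omega
    rw [splice_ge (by omega : n ≤ n + s')]
    show q (n + s' - n) = q s'
    rw [e]
  show (if n + s < n then PMF.pure (base (n + s))
      else (g fun s' : Fin n => splice n (extendH n h) q s'.1).act (n + s - n)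
        fun s' => splice n (extendH n h) q (n + s')) = (g h).act s q
  rw [if_neg h1, h2, h3]
  have e : n + s - n = s := by omega
  rw [e]

theorem exists_punish (PM : PlayMeasure Ac) {F : Play Ac → ℝ} (hF : Measurable F)
    {C : ℝ} (hC : ∀ p, |F p| ≤ C) (hFt : TailMeasurable F) (i : ι) (pstar : Play Ac)
    (n : ℕ) {δ : ℝ} (hδ : 0 < δ) :
    ∃ τ' : Profile Ac, ∀ σi' : Strategy Ac i,
      ∫ q, F (splice n pstar q) ∂ PM.μ (Function.update τ' i σi')
        ≤ minmax PM F i + δ := by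
  have hbI : ∀ σ' : Profile Ac, |∫ q, F (splice n pstar q) ∂ PM.μ σ'| ≤ C := by
    intro σ'
    haveI := PM.isProb σ'
    exact abs_integral_le_bdd _ (fun q => hC _)
  have hbE : ∀ σ' : Profile Ac, |expPay PM σ' F| ≤ C := by
    intro σ'
    haveI := PM.isProb σ'
    exact abs_integral_le_bdd _ hC
  -- a δ/2-optimal punishment profile in the original game
  have hlt : minmax PM F i < minmax PM F i + δ / 2 := by linarith
  obtain ⟨τ, hτ⟩ := exists_lt_of_ciInf_lt hlt
  have hτ' : ∀ σi : Strategy Ac i, expPay PM (Function.update τ i σi) F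
      < minmax PM F i + δ / 2 := by
    intro σi
    refine lt_of_le_of_lt ?_ hτ
    have hbdd : BddAbove (Set.range fun σi : Strategy Ac i =>
        expPay PM (Function.update τ i σi) F) := by
      refine ⟨C, ?_⟩
      rintro x ⟨σi', rfl⟩
      exact le_trans (le_abs_self _) (hbE _)
    exact le_ciSup hbdd σi
  -- subgame values against the shifted punishments
  set S : (Fin n → ∀ j, Ac j) → ℝ := fun h =>
    ⨆ σi' : Strategy Ac i, ∫ q, F (splice n pstar q)
      ∂ PM.μ (Function.update (fun j => (τ j).shift n (extendH n h)) i σi') with hS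
  have hSbdd : ∀ h, BddAbove (Set.range fun σi' : Strategy Ac i =>
      ∫ q, F (splice n pstar q)
        ∂ PM.μ (Function.update (fun j => (τ j).shift n (extendH n h)) i σi')) := by
    intro h
    refine ⟨C, ?_⟩
    rintro x ⟨σi', rfl⟩
    exact le_trans (le_abs_self _) (hbI _)
  -- near-optimal continuation deviations
  have hge : ∀ h : Fin n → ∀ j, Ac j, ∃ σi' : Strategy Ac i,
      S h - δ / 2 < ∫ q, F (splice n pstar q)
        ∂ PM.μ (Function.update (fun j => (τ j).shift n (extendH n h)) i σi') := by
    intro h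
    exact exists_lt_of_lt_ciSup (by linarith [hS ▸ (rfl : S h = S h)] : S h - δ / 2 < S h)
  choose g hg using hge
  -- the composite deviation
  set σcomp : Strategy Ac i := Strategy.graft n (fun t => pstar t i) g with hσcomp
  -- the shifted composite profile is the shifted punishment with continuation g h
  have hkey : ∀ h : Fin n → ∀ j, Ac j,
      shiftP (Function.update τ i σcomp) n (extendH n h)
        = Function.update (fun j => (τ j).shift n (extendH n h)) i (g h) := by
    intro h
    funext j
    by_cases hj : j = i
    · rw [hj]
      show (Function.update τ i σcomp i).shift n (extendH n h)
          = Function.update (fun j => (τ j).shift n (extendH n h)) i (g h) i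
      rw [Function.update_self, Function.update_self, hσcomp]
      exact Strategy.graft_shift n _ g h
    · show (Function.update τ i σcomp j).shift n (extendH n h)
          = Function.update (fun j => (τ j).shift n (extendH n h)) i (g h) j
      rw [Function.update_of_ne hj, Function.update_of_ne hj]
  -- apply the tower identity to the composite deviation
  haveI := PM.isProb (Function.update τ i σcomp)
  have htower := tower_integral PM (Function.update τ i σcomp) n hF hC
  have hterm : ∀ h : Fin n → ∀ j, Ac j,
      (PM.μ (Function.update τ i σcomp) (cylSet n (extendH n h))).toReal *
          ∫ q, F (splice n (extendH n h) q)
            ∂ PM.μ (shiftP (Function.update τ i σcomp) n (extendH n h))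
        ≥ (PM.μ (Function.update τ i σcomp) (cylSet n (extendH n h))).toReal *
            (S h - δ / 2) := by
    intro h
    have e1 : ∀ q, F (splice n (extendH n h) q) = F (splice n pstar q) :=
      fun q => tailF_splice hFt n _ _ q
    rw [hkey h]
    simp only [e1]
    exact mul_le_mul_of_nonneg_left (le_of_lt (hg h)) ENNReal.toReal_nonneg
  -- the total probability is one
  have hsum1 : ∑ h : Fin n → ∀ j, Ac j,
      (PM.μ (Function.update τ i σcomp) (cylSet n (extendH n h))).toReal = 1 := by
    have h1 : ∑ h : Fin n → ∀ j, Ac j,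
        PM.μ (Function.update τ i σcomp) (cylSet n (extendH n h)) = 1 := by
      have := sum_measure_inter (PM.μ (Function.update τ i σcomp)) n MeasurableSet.univ
      simp only [Set.univ_inter] at this
      rw [← this, measure_univ]
    have h2 := congrArg ENNReal.toReal h1
    rw [ENNReal.toReal_sum (fun h _ => measure_ne_top _ _)] at h2
    simpa using h2
  -- average of subgame values is small
  have havg : ∑ h : Fin n → ∀ j, Ac j,
      (PM.μ (Function.update τ i σcomp) (cylSet n (extendH n h))).toReal * S h
        < minmax PM F i + δ := by
    have h1 : expPay PM (Function.update τ i σcomp) F < minmax PM F i + δ / 2 := hτ' σcomp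
    rw [expPay, htower] at h1
    have h2 : ∑ h : Fin n → ∀ j, Ac j,
        (PM.μ (Function.update τ i σcomp) (cylSet n (extendH n h))).toReal * (S h - δ / 2)
          ≤ ∑ h : Fin n → ∀ j, Ac j,
            (PM.μ (Function.update τ i σcomp) (cylSet n (extendH n h))).toReal *
              ∫ q, F (splice n (extendH n h) q)
                ∂ PM.μ (shiftP (Function.update τ i σcomp) n (extendH n h)) :=
      Finset.sum_le_sum fun h _ => hterm h
    have h3 : ∑ h : Fin n → ∀ j, Ac j,
        (PM.μ (Function.update τ i σcomp) (cylSet n (extendH n h))).toReal * (S h - δ / 2)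
          = (∑ h : Fin n → ∀ j, Ac j,
              (PM.μ (Function.update τ i σcomp) (cylSet n (extendH n h))).toReal * S h)
            - δ / 2 := by
      have e : ∀ h : Fin n → ∀ j, Ac j,
          (PM.μ (Function.update τ i σcomp) (cylSet n (extendH n h))).toReal * (S h - δ / 2)
            = (PM.μ (Function.update τ i σcomp) (cylSet n (extendH n h))).toReal * S h
              - (PM.μ (Function.update τ i σcomp) (cylSet n (extendH n h))).toReal * (δ / 2) := by
        intro h; ring
      rw [Finset.sum_congr rfl fun h _ => e h, Finset.sum_sub_distrib,
        ← Finset.sum_mul, hsum1, one_mul]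
    linarith
  -- pick a good history
  have hexists : ∃ h : Fin n → ∀ j, Ac j, S h ≤ minmax PM F i + δ := by
    by_contra hc
    push_neg at hc
    have : minmax PM F i + δ ≤ ∑ h : Fin n → ∀ j, Ac j,
        (PM.μ (Function.update τ i σcomp) (cylSet n (extendH n h))).toReal * S h := by
      calc minmax PM F i + δ
          = ∑ h : Fin n → ∀ j, Ac j,
              (PM.μ (Function.update τ i σcomp) (cylSet n (extendH n h))).toReal *
                (minmax PM F i + δ) := by rw [← Finset.sum_mul, hsum1, one_mul]
        _ ≤ _ := Finset.sum_le_sum fun h _ =>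
            mul_le_mul_of_nonneg_left (le_of_lt (hc h)) ENNReal.toReal_nonneg
    linarith
  obtain ⟨h0, hh0⟩ := hexists
  refine ⟨fun j => (τ j).shift n (extendH n h0), fun σi' => ?_⟩
  refine le_trans ?_ hh0
  refine le_ciSup (hSbdd h0) σi'

end Punish

section EqStrat
open Classical

/-- The deviating player at time `t`, given the realized action profile `a`. -/
noncomputable def pick (pstar : Play Ac) (t : ℕ) (a : ∀ j, Ac j) : ι :=
  if h : ∃ k, a k ≠ pstar t k then Classical.choose h else Classical.arbitrary ι

theorem pick_eq (pstar : Play Ac) (t : ℕ) {a : ∀ j, Ac j} {i : ι}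
    (hne : a i ≠ pstar t i) (hoth : ∀ k, k ≠ i → a k = pstar t k) :
    pick pstar t a = i := by
  rw [pick, dif_pos ⟨i, hne⟩]
  by_contra hk
  exact (Classical.choose_spec (⟨i, hne⟩ : ∃ k, a k ≠ pstar t k)) (hoth _ hk)

/-- The first deviation time before `t`. -/
noncomputable def devT (pstar p : Play Ac) (t : ℕ) : ℕ :=
  if h : ∃ s, s < t ∧ p s ≠ pstar s then Nat.find h else 0

theorem devT_spec (pstar p : Play Ac) (t : ℕ) (h : ∃ s, s < t ∧ p s ≠ pstar s) :
    devT pstar p t < t ∧ p (devT pstar p t) ≠ pstar (devT pstar p t)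
      ∧ ∀ s, s < devT pstar p t → p s = pstar s := by
  rw [devT, dif_pos h]
  obtain ⟨h1, h2⟩ := Nat.find_spec h
  refine ⟨h1, h2, fun s hs => ?_⟩
  by_contra hne
  exact (Nat.find_min h hs) ⟨lt_trans hs h1, hne⟩

theorem devT_eq (pstar p : Play Ac) (t : ℕ) {d : ℕ} (hd : d < t) (hne : p d ≠ pstar d)
    (hmin : ∀ s, s < d → p s = pstar s) : devT pstar p t = d := by
  have h : ∃ s, s < t ∧ p s ≠ pstar s := ⟨d, hd, hne⟩
  rw [devT, dif_pos h]
  refine le_antisymm (Nat.find_le ⟨hd, hne⟩) ?_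
  by_contra hlt
  push_neg at hlt
  obtain ⟨h1, h2⟩ := Nat.find_spec h
  exact h2 (hmin _ hlt)

/-- The mixed action of the grim-trigger equilibrium strategy. -/
noncomputable def eqAct (pstar : Play Ac) (P : ι → ℕ → Profile Ac) (i : ι) (t : ℕ)
    (p : Play Ac) : PMF (Ac i) :=
  if h : ∃ s, s < t ∧ p s ≠ pstar s then
    (P (pick pstar (devT pstar p t) (p (devT pstar p t))) (devT pstar p t + 1) i).act
      (t - (devT pstar p t + 1)) fun s => p (devT pstar p t + 1 + s)
  else PMF.pure (pstar t i)

theorem eqAct_onpath (pstar : Play Ac) (P : ι → ℕ → Profile Ac) (i : ι) {t : ℕ}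
    {p : Play Ac} (hp : ∀ s, s < t → p s = pstar s) :
    eqAct pstar P i t p = PMF.pure (pstar t i) := by
  have h : ¬ ∃ s, s < t ∧ p s ≠ pstar s := by
    intro ⟨s, hst, hs⟩
    exact hs (hp s hst)
  rw [eqAct, dif_neg h]

theorem eqAct_dev (pstar : Play Ac) (P : ι → ℕ → Profile Ac) (i : ι) {t : ℕ}
    {p : Play Ac} (h : ∃ s, s < t ∧ p s ≠ pstar s) :
    eqAct pstar P i t p
      = (P (pick pstar (devT pstar p t) (p (devT pstar p t))) (devT pstar p t + 1) i).act
          (t - (devT pstar p t + 1)) fun s => p (devT pstar p t + 1 + s) := by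
  rw [eqAct, dif_pos h]

/-- The grim-trigger equilibrium strategy: follow `pstar`, and after the first
deviation (by the deviator identified by `pick`), switch to the punishment profile. -/
noncomputable def eqStrat (pstar : Play Ac) (P : ι → ℕ → Profile Ac) (i : ι) :
    Strategy Ac i where
  act := eqAct pstar P i
  depends_on_past := by
    intro t p q hpq
    by_cases h : ∃ s, s < t ∧ p s ≠ pstar s
    · obtain ⟨s0, hs0t, hs0⟩ := h
      have hq : ∃ s, s < t ∧ q s ≠ pstar s :=
        ⟨s0, hs0t, by rw [← hpq s0 hs0t]; exact hs0⟩
      rw [eqAct_dev pstar P i ⟨s0, hs0t, hs0⟩, eqAct_dev pstar P i hq]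
      have hdp := devT_spec pstar p t ⟨s0, hs0t, hs0⟩
      have hd : devT pstar q t = devT pstar p t :=
        devT_eq pstar q t hdp.1 (by rw [← hpq _ hdp.1]; exact hdp.2.1)
          fun s hs => by rw [← hpq s (lt_trans hs hdp.1)]; exact hdp.2.2 s hs
      rw [hd]
      have hpt : q (devT pstar p t) = p (devT pstar p t) := (hpq _ hdp.1).symm
      rw [hpt]
      refine (P _ _ i).depends_on_past _ _ _ fun s hs => hpq _ ?_
      have := hdp.1
      omega
    · have hq : ¬ ∃ s, s < t ∧ q s ≠ pstar s := by
        intro ⟨s0, hs0t, hs0⟩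
        exact h ⟨s0, hs0t, by rw [hpq s0 hs0t]; exact hs0⟩
      rw [eqAct_onpath pstar P i fun s hs => not_ne_iff.1 fun hc => h ⟨s, hs, hc⟩,
        eqAct_onpath pstar P i fun s hs => not_ne_iff.1 fun hc => hq ⟨s, hs, hc⟩]

@[simp] theorem eqStrat_act (pstar : Play Ac) (P : ι → ℕ → Profile Ac) (i : ι) :
    (eqStrat pstar P i).act = eqAct pstar P i := rfl

theorem eqStrat_act_onpath (pstar : Play Ac) (P : ι → ℕ → Profile Ac) (i : ι) {t : ℕ}
    {p : Play Ac} (hp : ∀ s, s < t → p s = pstar s) :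
    (eqStrat pstar P i).act t p = PMF.pure (pstar t i) := by
  rw [eqStrat_act]
  exact eqAct_onpath pstar P i hp

/-- After a first deviation by `i` at time `t`, the equilibrium strategies follow the
punishment profile against `i` in the subgame starting at time `t+1`. -/
theorem eqStrat_shift_dev (pstar : Play Ac) (P : ι → ℕ → Profile Ac) {i : ι} {t : ℕ}
    {b : Ac i} (hb : b ≠ pstar t i) {X : Play Ac} (hX : ∀ s, s < t → X s = pstar s)
    (hXt : X t = Function.update (pstar t) i b) (j : ι) :
    (eqStrat pstar P j).shift (t + 1) X = P i (t + 1) j := by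
  apply Strategy.ext'
  funext s q
  show (eqStrat pstar P j).act (t + 1 + s) (splice (t + 1) X q) = (P i (t + 1) j).act s q
  rw [eqStrat_act]
  set r := splice (t + 1) X q with hr
  have hrt : r t = Function.update (pstar t) i b := by
    rw [hr, splice_lt (by omega)]
    exact hXt
  have hne : r t ≠ pstar t := by
    rw [hrt]
    intro hcontr
    apply hb
    have := congrFun hcontr i
    rwa [Function.update_self] at this
  have hex : ∃ s', s' < t + 1 + s ∧ r s' ≠ pstar s' := ⟨t, by omega, hne⟩
  have hd : devT pstar r (t + 1 + s) = t :=
    devT_eq pstar r _ (by omega) hne fun s' hs' => by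
      rw [hr, splice_lt (by omega)]
      exact hX s' hs'
  rw [eqAct_dev pstar P j hex, hd, hrt,
    pick_eq pstar t (by rw [Function.update_self]; exact hb)
      (fun k hk => Function.update_of_ne hk _ _)]
  have hhist : (fun s' => r (t + 1 + s')) = q := by
    funext s'
    rw [hr, splice_ge (by omega : t + 1 ≤ t + 1 + s')]
    have e : t + 1 + s' - (t + 1) = s' := by omega
    show q (t + 1 + s' - (t + 1)) = q s'
    rw [e]
  have eidx : t + 1 + s - (t + 1) = s := by omega
  rw [hhist, eidx]

/-- Under the equilibrium profile, the play is `pstar` with probability one. -/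
theorem eqStrat_measure (PM : PlayMeasure Ac) (pstar : Play Ac) (P : ι → ℕ → Profile Ac) :
    PM.μ (fun j => eqStrat pstar P j) = Measure.dirac pstar := by
  haveI := PM.isProb fun j => eqStrat pstar P j
  refine measure_ext_cyl fun n r => ?_
  rw [cyl_measure, Measure.dirac_apply' _ (measurableSet_cylSet n r)]
  by_cases hagr : ∀ t, t < n → pstar t = r t
  · have hmem : pstar ∈ (cylSet n r : Set (Play Ac)) := hagr
    rw [Set.indicator_of_mem hmem]
    have hone : ∀ t ∈ Finset.range n,
        (∏ j, ((eqStrat pstar P j).act t r) (r t j)) = 1 := by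
      intro t ht
      rw [Finset.mem_range] at ht
      have hact : ∀ j, ((eqStrat pstar P j).act t r) = PMF.pure (pstar t j) := fun j =>
        eqStrat_act_onpath pstar P j fun s hs => (hagr s (by omega)).symm
      have hval : ∀ j, r t j = pstar t j := fun j => by rw [← hagr t ht]
      refine Finset.prod_eq_one fun j _ => ?_
      rw [hact j, hval j, PMF.pure_apply]
      simp
    rw [Finset.prod_congr rfl hone]
    simp
  · push_neg at hagr
    have hex : ∃ s, s < n ∧ r s ≠ pstar s := by
      obtain ⟨t, ht, hne⟩ := hagr
      exact ⟨t, ht, fun hc => hne hc.symm⟩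
    have spec := devT_spec pstar r n hex
    have hnotmem : pstar ∉ (cylSet n r : Set (Play Ac)) := by
      intro hmem
      exact spec.2.1 (hmem _ spec.1).symm
    rw [Set.indicator_of_notMem hnotmem]
    have hk : ∃ k, r (devT pstar r n) k ≠ pstar (devT pstar r n) k := by
      by_contra hc
      push_neg at hc
      exact spec.2.1 (funext hc)
    obtain ⟨k, hk⟩ := hk
    refine Finset.prod_eq_zero (Finset.mem_range.2 spec.1) ?_
    refine Finset.prod_eq_zero (Finset.mem_univ k) ?_
    rw [eqStrat_act_onpath pstar P k fun s hs => spec.2.2 s hs, PMF.pure_apply]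
    simp [hk]

end EqStrat

section Recursion

/-- The play deviating from `pstar` only at time `t`, in coordinate `i`, to `b`. -/
def devPlay (pstar : Play Ac) (i : ι) (t : ℕ) (b : Ac i) : Play Ac :=
  fun s => if s = t then Function.update (pstar t) i b else pstar s

theorem devPlay_ne {pstar : Play Ac} {i : ι} {t s : ℕ} (hs : s ≠ t) (b : Ac i) :
    devPlay pstar i t b s = pstar s := if_neg hs

theorem devPlay_self (pstar : Play Ac) (i : ι) (t : ℕ) (b : Ac i) :
    devPlay pstar i t b t = Function.update (pstar t) i b := if_pos rfl

open Classical in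
theorem recursion_step (PM : PlayMeasure Ac) (pstar : Play Ac) (P : ι → ℕ → Profile Ac)
    (i : ι) (σi : Strategy Ac i) {F : Play Ac → ℝ} (hF : Measurable F) {C : ℝ}
    (hC : ∀ p, |F p| ≤ C) (hFt : TailMeasurable F) (N : ℕ) :
    ∫ q in cylSet N pstar, F q ∂ PM.μ (Function.update (fun j => eqStrat pstar P j) i σi)
      = (∫ q in cylSet (N+1) pstar, F q
            ∂ PM.μ (Function.update (fun j => eqStrat pstar P j) i σi))
        + ∑ b : Ac i, (if b = pstar N i then 0 else
            (PM.μ (Function.update (fun j => eqStrat pstar P j) i σi)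
                (cylSet (N+1) (devPlay pstar i N b))).toReal *
              ∫ q, F (splice (N+1) pstar q)
                ∂ PM.μ (Function.update (P i (N+1)) i
                    (σi.shift (N+1) (devPlay pstar i N b)))) := by
  set ρ : Profile Ac := Function.update (fun j => eqStrat pstar P j) i σi with hρ
  set G : Play Ac → ℝ := fun q => F (splice N pstar q) with hG
  have hGmeas : Measurable G := hF.comp (measurable_splice N pstar)
  have hGbdd : ∀ q, |G q| ≤ C := fun q => hC _
  set X : (Fin 1 → ∀ j, Ac j) → Play Ac := fun h => splice N pstar (extendH 1 h) with hX
  -- agreement facts about X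
  have hXlt : ∀ h (s : ℕ), s < N → X h s = pstar s := by
    intro h s hs
    rw [hX]
    exact splice_lt hs _ _
  have hXN : ∀ h, X h N = extendH 1 h 0 := by
    intro h
    have e : N - N = 0 := by omega
    rw [hX]
    show splice N pstar (extendH 1 h) N = extendH 1 h 0
    rw [splice_ge (le_refl N), e]
  -- tower at level N and at level 1 in the subgame
  have h1 : ∫ q in cylSet N pstar, F q ∂ PM.μ ρ
      = (PM.μ ρ (cylSet N pstar)).toReal * ∫ q, G q ∂ PM.μ (shiftP ρ N pstar) :=
    tower_setIntegral PM ρ N pstar hF hC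
  have h2 := tower_integral PM (shiftP ρ N pstar) 1 hGmeas hGbdd
  -- rewrite each term of the level-1 tower
  have f1 : ∀ h : Fin 1 → ∀ j, Ac j,
      shiftP (shiftP ρ N pstar) 1 (extendH 1 h) = shiftP ρ (N + 1) (X h) := by
    intro h
    funext j
    exact Strategy.shift_shift (ρ j) N 1 pstar (extendH 1 h)
  have f2 : ∀ (h : Fin 1 → ∀ j, Ac j) (q : Play Ac),
      G (splice 1 (extendH 1 h) q) = F (splice (N + 1) (X h) q) := by
    intro h q
    rw [hG]
    show F (splice N pstar (splice 1 (extendH 1 h) q)) = F (splice (N + 1) (X h) q)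
    rw [splice_splice]
  have f3 : ∀ h : Fin 1 → ∀ j, Ac j,
      PM.μ ρ (cylSet (N+1) (X h))
        = PM.μ ρ (cylSet N pstar)
          * PM.μ (shiftP ρ N pstar) (cylSet 1 (extendH 1 h)) := by
    intro h
    rw [cyl_measure, cyl_measure, cyl_measure, Finset.prod_range_succ,
      Finset.prod_range_one]
    congr 1
    · refine Finset.prod_congr rfl fun t ht => ?_
      rw [Finset.mem_range] at ht
      refine Finset.prod_congr rfl fun j _ => ?_
      rw [(ρ j).depends_on_past t (X h) pstar fun s hs => hXlt h s (by omega),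
        hXlt h t ht]
    · refine Finset.prod_congr rfl fun j _ => ?_
      show ((ρ j).act N (X h)) (X h N j)
          = (((ρ j).shift N pstar).act 0 (extendH 1 h)) (extendH 1 h 0 j)
      rw [Strategy.shift_act, hXN h]
      rfl
  -- the summand as a function of the realized action profile
  have hmain : ∫ q in cylSet N pstar, F q ∂ PM.μ ρ
      = ∑ h : Fin 1 → ∀ j, Ac j, (PM.μ ρ (cylSet (N+1) (X h))).toReal *
          ∫ q, F (splice (N + 1) (X h) q) ∂ PM.μ (shiftP ρ (N + 1) (X h)) := by
    rw [h1, h2, Finset.mul_sum]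
    refine Finset.sum_congr rfl fun h _ => ?_
    rw [f3, ENNReal.toReal_mul, f1]
    have : ∀ q, G (splice 1 (extendH 1 h) q) = F (splice (N + 1) (X h) q) := f2 h
    simp only [this]
    ring
  -- reindex the sum over length-one histories by action profiles
  set Φ : (∀ j, Ac j) → ℝ := fun a =>
    (PM.μ ρ (cylSet (N+1) (X fun _ => a))).toReal *
      ∫ q, F (splice (N + 1) (X fun _ => a) q) ∂ PM.μ (shiftP ρ (N + 1) (X fun _ => a))
    with hΦ
  have hreindex : ∑ h : Fin 1 → ∀ j, Ac j, (PM.μ ρ (cylSet (N+1) (X h))).toReal *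
        ∫ q, F (splice (N + 1) (X h) q) ∂ PM.μ (shiftP ρ (N + 1) (X h))
      = ∑ a : ∀ j, Ac j, Φ a := by
    refine Fintype.sum_equiv (Equiv.funUnique (Fin 1) (∀ j, Ac j)) _ _ fun h => ?_
    have hh : (fun _ : Fin 1 => (Equiv.funUnique (Fin 1) (∀ j, Ac j)) h) = h := by
      funext s
      show h default = h s
      have hs0 : s = default := Subsingleton.elim s default
      rw [hs0]
    rw [hΦ]
    dsimp only
    rw [hh]
  -- profiles with an off-`i` deviation have zero probability
  have hzero : ∀ a : ∀ j, Ac j, (∃ j, j ≠ i ∧ a j ≠ pstar N j) →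
      PM.μ ρ (cylSet (N+1) (X fun _ => a)) = 0 := by
    rintro a ⟨j, hj, hne⟩
    rw [cyl_measure]
    refine Finset.prod_eq_zero (Finset.mem_range.2 (by omega : N < N + 1)) ?_
    refine Finset.prod_eq_zero (Finset.mem_univ j) ?_
    have hρj : ρ j = eqStrat pstar P j := Function.update_of_ne hj _ _
    have hact : (ρ j).act N (X fun _ => a) = PMF.pure (pstar N j) := by
      rw [hρj]
      exact eqStrat_act_onpath pstar P j fun s hs => hXlt _ s hs
    have hval : (X fun _ => a) N j = a j := by
      rw [hXN, extendH_lt (by omega : (0:ℕ) < 1)]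
    rw [hact, hval, PMF.pure_apply]
    simp [hne]
  -- restrict the sum to unilateral deviations of player i
  have hinj : ∀ b ∈ (Finset.univ : Finset (Ac i)), ∀ b' ∈ (Finset.univ : Finset (Ac i)),
      Function.update (pstar N) i b = Function.update (pstar N) i b' → b = b' := by
    intro b _ b' _ hbb
    have := congrFun hbb i
    rwa [Function.update_self, Function.update_self] at this
  have hsplit : ∑ a : ∀ j, Ac j, Φ a
      = ∑ b : Ac i, Φ (Function.update (pstar N) i b) := by
    rw [← Finset.sum_image hinj]
    refine (Finset.sum_subset (Finset.subset_univ _) ?_).symm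
    intro a _ hnotim
    have hex : ∃ j, j ≠ i ∧ a j ≠ pstar N j := by
      by_contra hc
      push_neg at hc
      refine hnotim (Finset.mem_image.2 ⟨a i, Finset.mem_univ _, ?_⟩)
      funext j
      by_cases hj : j = i
      · rw [hj, Function.update_self]
      · rw [Function.update_of_ne hj]
        exact (hc j hj).symm
    rw [hΦ]
    dsimp only
    rw [hzero a hex]
    simp
  -- evaluate the summands
  have hb_eval : ∀ b : Ac i, Φ (Function.update (pstar N) i b)
      = if b = pstar N i then (∫ q in cylSet (N+1) pstar, F q ∂ PM.μ ρ)
        else (PM.μ ρ (cylSet (N+1) (devPlay pstar i N b))).toReal *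
          ∫ q, F (splice (N+1) pstar q)
            ∂ PM.μ (Function.update (P i (N+1)) i
                (σi.shift (N+1) (devPlay pstar i N b))) := by
    intro b
    have haN : (X fun _ => Function.update (pstar N) i b) N
        = Function.update (pstar N) i b := by
      rw [hXN, extendH_lt (by omega : (0:ℕ) < 1)]
    by_cases hb : b = pstar N i
    · have ha : Function.update (pstar N) i b = pstar N := by
        rw [hb]
        exact Function.update_eq_self _ _
      have hagree : ∀ s, s < N + 1 →
          (X fun _ => Function.update (pstar N) i b) s = pstar s := by
        intro s hs
        by_cases hsN : s < N
        · exact hXlt _ s hsN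
        · have : s = N := by omega
          rw [this, haN, ha]
      rw [if_pos hb, hΦ]
      dsimp only
      rw [tower_setIntegral PM ρ (N+1) pstar hF hC]
      have e1 : cylSet (N+1) (X fun _ => Function.update (pstar N) i b)
          = (cylSet (N+1) pstar : Set (Play Ac)) := cylSet_congr hagree
      have e2 : (splice (N+1) (X fun _ => Function.update (pstar N) i b)
          : Play Ac → Play Ac) = splice (N+1) pstar := splice_congr hagree
      have e3 : shiftP ρ (N+1) (X fun _ => Function.update (pstar N) i b)
          = shiftP ρ (N+1) pstar := funext fun j => Strategy.shift_congr _ hagree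
      rw [e1, e3]
      simp only [e2]
    · have hbne : b ≠ pstar N i := hb
      have hagree : ∀ s, s < N + 1 →
          (X fun _ => Function.update (pstar N) i b) s = devPlay pstar i N b s := by
        intro s hs
        by_cases hsN : s < N
        · rw [hXlt _ s hsN, devPlay_ne (by omega) b]
        · have : s = N := by omega
          rw [this, haN, devPlay_self]
      have e1 : cylSet (N+1) (X fun _ => Function.update (pstar N) i b)
          = (cylSet (N+1) (devPlay pstar i N b) : Set (Play Ac)) := cylSet_congr hagree
      have e3 : shiftP ρ (N+1) (X fun _ => Function.update (pstar N) i b)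
          = Function.update (P i (N+1)) i (σi.shift (N+1) (devPlay pstar i N b)) := by
        funext j
        by_cases hj : j = i
        · rw [hj]
          show ((ρ i).shift (N+1) (X fun _ => Function.update (pstar N) i b))
              = Function.update (P i (N+1)) i (σi.shift (N+1) (devPlay pstar i N b)) i
          rw [Function.update_self, hρ, Function.update_self]
          exact Strategy.shift_congr σi hagree
        · show ((ρ j).shift (N+1) (X fun _ => Function.update (pstar N) i b))
              = Function.update (P i (N+1)) i (σi.shift (N+1) (devPlay pstar i N b)) j
          rw [Function.update_of_ne hj, hρ, Function.update_of_ne hj]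
          exact eqStrat_shift_dev pstar P hbne (fun s hs => hXlt _ s hs) haN j
      have e4 : ∀ q, F (splice (N+1) (X fun _ => Function.update (pstar N) i b) q)
          = F (splice (N+1) pstar q) := fun q => tailF_splice hFt _ _ _ q
      rw [if_neg hb, hΦ]
      dsimp only
      rw [e1, e3]
      simp only [e4]
  -- assemble
  have hiteq : ∀ b : Ac i,
      (if b = pstar N i then (∫ q in cylSet (N+1) pstar, F q ∂ PM.μ ρ)
        else (PM.μ ρ (cylSet (N+1) (devPlay pstar i N b))).toReal *
          ∫ q, F (splice (N+1) pstar q)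
            ∂ PM.μ (Function.update (P i (N+1)) i
                (σi.shift (N+1) (devPlay pstar i N b))))
      = (if b = pstar N i then (∫ q in cylSet (N+1) pstar, F q ∂ PM.μ ρ) else 0)
        + (if b = pstar N i then 0 else
            (PM.μ ρ (cylSet (N+1) (devPlay pstar i N b))).toReal *
              ∫ q, F (splice (N+1) pstar q)
                ∂ PM.μ (Function.update (P i (N+1)) i
                    (σi.shift (N+1) (devPlay pstar i N b)))) := by
    intro b
    by_cases hb : b = pstar N i <;> simp [hb]
  rw [hmain, hreindex, hsplit, Finset.sum_congr rfl fun b _ => hb_eval b,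
    Finset.sum_congr rfl fun b _ => hiteq b, Finset.sum_add_distrib,
    Finset.sum_ite_eq' Finset.univ (pstar N i)
      (fun _ => ∫ q in cylSet (N+1) pstar, F q ∂ PM.μ ρ)]
  simp

end Recursion

open Classical in
theorem recursion (PM : PlayMeasure Ac) (pstar : Play Ac) (P : ι → ℕ → Profile Ac)
    (i : ι) (σi : Strategy Ac i) {F : Play Ac → ℝ} (hF : Measurable F) {C : ℝ}
    (hC : ∀ p, |F p| ≤ C) (hFt : TailMeasurable F) (N : ℕ) :
    ∫ p, F p ∂ PM.μ (Function.update (fun j => eqStrat pstar P j) i σi)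
      = (∫ q in cylSet N pstar, F q
            ∂ PM.μ (Function.update (fun j => eqStrat pstar P j) i σi))
        + ∑ t ∈ Finset.range N, ∑ b : Ac i, (if b = pstar t i then 0 else
            (PM.μ (Function.update (fun j => eqStrat pstar P j) i σi)
                (cylSet (t+1) (devPlay pstar i t b))).toReal *
              ∫ q, F (splice (t+1) pstar q)
                ∂ PM.μ (Function.update (P i (t+1)) i
                    (σi.shift (t+1) (devPlay pstar i t b)))) := by
  induction N with
  | zero =>
    have huniv : (cylSet 0 pstar : Set (Play Ac)) = Set.univ := by
      ext q; simp [cylSet]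
    rw [huniv]
    simp [Measure.restrict_univ]
  | succ N ih =>
    rw [ih, Finset.sum_range_succ, recursion_step PM pstar P i σi hF hC hFt N]
    ring

theorem tendsto_setIntegral_cylSet (PM : PlayMeasure Ac) (σ : Profile Ac) (pstar : Play Ac)
    {F : Play Ac → ℝ} (hF : Measurable F) {C : ℝ} (hC : ∀ p, |F p| ≤ C) :
    Filter.Tendsto (fun N => ∫ q in cylSet N pstar, F q ∂ PM.μ σ) Filter.atTop
      (nhds ((PM.μ σ {pstar}).toReal * F pstar)) := by
  haveI := PM.isProb σ
  have hsingset : ({pstar} : Set (Play Ac)) = ⋂ N, cylSet N pstar := by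
    ext q
    simp only [Set.mem_singleton_iff, Set.mem_iInter]
    constructor
    · rintro rfl N t ht; rfl
    · intro hq; funext t; exact hq (t + 1) t (by omega)
  have hsing : MeasurableSet ({pstar} : Set (Play Ac)) := by
    rw [hsingset]
    exact MeasurableSet.iInter fun N => measurableSet_cylSet _ _
  have hlim : ∫ q in ({pstar} : Set (Play Ac)), F q ∂ PM.μ σ
      = (PM.μ σ {pstar}).toReal * F pstar := by
    show ∫ q, F q ∂ (PM.μ σ).restrict {pstar} = _
    rw [Measure.restrict_singleton, integral_smul_measure,
      integral_dirac' F pstar hF.stronglyMeasurable]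
    rfl
  rw [← hlim]
  have h1 : ∀ N, ∫ q in cylSet N pstar, F q ∂ PM.μ σ
      = ∫ q, (cylSet N pstar).indicator F q ∂ PM.μ σ :=
    fun N => (integral_indicator (measurableSet_cylSet N pstar)).symm
  have h2 : ∫ q in ({pstar} : Set (Play Ac)), F q ∂ PM.μ σ
      = ∫ q, ({pstar} : Set (Play Ac)).indicator F q ∂ PM.μ σ :=
    (integral_indicator hsing).symm
  rw [h2]
  simp only [h1]
  have hC0 : 0 ≤ C := le_trans (abs_nonneg _) (hC pstar)
  refine tendsto_integral_of_dominated_convergence (fun _ => C) ?_ ?_ ?_ ?_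
  · intro N
    exact (hF.indicator (measurableSet_cylSet N pstar)).aestronglyMeasurable
  · exact integrable_const C
  · intro N
    refine Filter.Eventually.of_forall fun q => ?_
    by_cases hq : q ∈ (cylSet N pstar : Set (Play Ac))
    · rw [Set.indicator_of_mem hq]
      simpa using hC q
    · rw [Set.indicator_of_notMem hq]
      simpa using hC0
  · refine Filter.Eventually.of_forall fun q => ?_
    by_cases hq : q = pstar
    · subst hq
      have e : ∀ N : ℕ, (cylSet N q : Set (Play Ac)).indicator F q = F q := by
        intro N
        apply Set.indicator_of_mem
        exact fun t _ => rfl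
      have e2 : ({q} : Set (Play Ac)).indicator F q = F q :=
        Set.indicator_of_mem rfl F
      simp only [e, e2]
      exact tendsto_const_nhds
    · have hex : ∃ t, q t ≠ pstar t := by
        by_contra hc
        push_neg at hc
        exact hq (funext hc)
      obtain ⟨t, ht⟩ := hex
      have hq' : q ∉ ({pstar} : Set (Play Ac)) := by simpa using hq
      have e0 : ({pstar} : Set (Play Ac)).indicator F q = 0 :=
        Set.indicator_of_notMem hq' F
      rw [e0]
      refine Filter.Tendsto.congr' ?_ tendsto_const_nhds
      refine Filter.eventually_atTop.2 ⟨t + 1, fun N hN => ?_⟩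
      have hnm : q ∉ (cylSet N pstar : Set (Play Ac)) := by
        intro hmem
        exact ht (hmem t (by omega))
      exact (Set.indicator_of_notMem hnm F).symm

theorem integral_one_play (PM : PlayMeasure Ac) (σ : Profile Ac) :
    ∫ _q, (1:ℝ) ∂ PM.μ σ = 1 := by
  haveI := PM.isProb σ
  simp


/-- If there is a play `p*` with `f i p* > v̄_i - ε` for every player `i`,
then the game admits an `ε`-equilibrium. -/
theorem exists_eps_equilibrium_of_good_play (PM : PlayMeasure Ac) (f : ι → Play Ac → ℝ)
    (hbdd : ∀ j, BddPayoff (f j)) (hmeas : ∀ j, Measurable (f j))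
    (htail : ∀ j, TailMeasurable (f j))
    (ε : ℝ) (hε : 0 < ε)
    (pstar : Play Ac) (hp : ∀ i, minmax PM (f i) i - ε < f i pstar) :
    ∃ σ : Profile Ac, IsEpsEquilibrium PM f ε σ := by
  classical
  choose Cb hCb using hbdd
  have hδ : ∀ j, 0 < f j pstar + ε - minmax PM (f j) j := by
    intro j
    have := hp j
    linarith
  have hpun : ∀ (j : ι) (n : ℕ), ∃ τ' : Profile Ac, ∀ σj' : Strategy Ac j,
      ∫ q, f j (splice n pstar q) ∂ PM.μ (Function.update τ' j σj')
        ≤ minmax PM (f j) j + (f j pstar + ε - minmax PM (f j) j) :=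
    fun j n => exists_punish PM (hmeas j) (hCb j) (htail j) j pstar n (hδ j)
  choose P hP using hpun
  refine ⟨fun j => eqStrat pstar P j, ?_⟩
  intro i σi
  haveI := PM.isProb fun j => eqStrat pstar P j
  have heq : expPay PM (fun j => eqStrat pstar P j) (f i) = f i pstar := by
    rw [expPay, eqStrat_measure PM pstar P,
      integral_dirac' _ _ (hmeas i).stronglyMeasurable]
  rw [heq]
  set ρ : Profile Ac := Function.update (fun j => eqStrat pstar P j) i σi with hρdef
  haveI := PM.isProb ρ
  set M : ℝ := f i pstar + ε with hM
  have hpP : ∀ (n : ℕ) (σi' : Strategy Ac i),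
      ∫ q, f i (splice n pstar q) ∂ PM.μ (Function.update (P i n) i σi') ≤ M := by
    intro n σi'
    have h1 := hP i n σi'
    have h2 : minmax PM (f i) i + (f i pstar + ε - minmax PM (f i) i) = M := by
      rw [hM]; ring
    linarith
  have hrecF := fun N => recursion PM pstar P i σi (hmeas i) (hCb i) (htail i) N
  have hrec1 := fun N => recursion PM pstar P i σi (F := fun _ => (1:ℝ))
    measurable_const (C := 1) (fun p => by simp) (fun p q _ => rfl) N
  -- total probability identity
  have hq1 : ∀ N : ℕ, (1:ℝ) = (PM.μ ρ (cylSet N pstar)).toReal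
      + ∑ t ∈ Finset.range N, ∑ b : Ac i, (if b = pstar t i then 0 else
          (PM.μ ρ (cylSet (t+1) (devPlay pstar i t b))).toReal) := by
    intro N
    have h := hrec1 N
    rw [← hρdef] at h
    rw [integral_one_play PM ρ] at h
    simp only [integral_one_play PM, mul_one, setIntegral_const, smul_eq_mul] at h
    exact h
  -- the deviation payoff bound at every horizon
  have hbound : ∀ N : ℕ, ∫ p, f i p ∂ PM.μ ρ
      ≤ (∫ q in cylSet N pstar, f i q ∂ PM.μ ρ)
        + (1 - (PM.μ ρ (cylSet N pstar)).toReal) * M := by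
    intro N
    have h := hrecF N
    rw [← hρdef] at h
    rw [h]
    have h2 : ∑ t ∈ Finset.range N, ∑ b : Ac i, (if b = pstar t i then 0 else
          (PM.μ ρ (cylSet (t+1) (devPlay pstar i t b))).toReal *
            ∫ q, f i (splice (t+1) pstar q)
              ∂ PM.μ (Function.update (P i (t+1)) i
                  (σi.shift (t+1) (devPlay pstar i t b))))
        ≤ ∑ t ∈ Finset.range N, ∑ b : Ac i, (if b = pstar t i then 0 else
            (PM.μ ρ (cylSet (t+1) (devPlay pstar i t b))).toReal) * M := by
      refine Finset.sum_le_sum fun t _ => Finset.sum_le_sum fun b _ => ?_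
      by_cases hb : b = pstar t i
      · simp [hb]
      · rw [if_neg hb, if_neg hb]
        exact mul_le_mul_of_nonneg_left (hpP (t+1) _) ENNReal.toReal_nonneg
    have h3 : ∑ t ∈ Finset.range N, ∑ b : Ac i, (if b = pstar t i then 0 else
          (PM.μ ρ (cylSet (t+1) (devPlay pstar i t b))).toReal) * M
        = (1 - (PM.μ ρ (cylSet N pstar)).toReal) * M := by
      have e1 : ∀ t : ℕ, ∑ b : Ac i, (if b = pstar t i then 0 else
            (PM.μ ρ (cylSet (t+1) (devPlay pstar i t b))).toReal) * M
          = (∑ b : Ac i, (if b = pstar t i then 0 else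
              (PM.μ ρ (cylSet (t+1) (devPlay pstar i t b))).toReal)) * M :=
        fun t => (Finset.sum_mul _ _ _).symm
      rw [Finset.sum_congr rfl fun t _ => e1 t, ← Finset.sum_mul]
      have := hq1 N
      have e2 : ∑ t ∈ Finset.range N, ∑ b : Ac i, (if b = pstar t i then 0 else
            (PM.μ ρ (cylSet (t+1) (devPlay pstar i t b))).toReal)
          = 1 - (PM.μ ρ (cylSet N pstar)).toReal := by linarith
      rw [e2]
    linarith
  -- pass to the limit
  have hT1 := tendsto_setIntegral_cylSet PM ρ pstar (hmeas i) (hCb i)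
  have hT2 := tendsto_setIntegral_cylSet PM ρ pstar (F := fun _ => (1:ℝ))
    measurable_const (C := 1) (fun p => by simp)
  have hq_lim : Filter.Tendsto (fun N => (PM.μ ρ (cylSet N pstar)).toReal)
      Filter.atTop (nhds ((PM.μ ρ {pstar}).toReal)) := by
    have e : ∀ N : ℕ, ∫ q in cylSet N pstar, (1:ℝ) ∂ PM.μ ρ
        = (PM.μ ρ (cylSet N pstar)).toReal := by
      intro N
      rw [setIntegral_const]
      simp
      rfl
    simpa only [e, mul_one] using hT2
  set w : ℝ := (PM.μ ρ {pstar}).toReal with hw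
  have hRHS : Filter.Tendsto (fun N =>
      (∫ q in cylSet N pstar, f i q ∂ PM.μ ρ)
        + (1 - (PM.μ ρ (cylSet N pstar)).toReal) * M) Filter.atTop
      (nhds (w * f i pstar + (1 - w) * M)) :=
    hT1.add ((tendsto_const_nhds.sub hq_lim).mul tendsto_const_nhds)
  have hle : ∫ p, f i p ∂ PM.μ ρ ≤ w * f i pstar + (1 - w) * M :=
    ge_of_tendsto hRHS (Filter.Eventually.of_forall hbound)
  have hw0 : (0:ℝ) ≤ w := ENNReal.toReal_nonneg
  have hw1 : w ≤ 1 := by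
    have hle1 : PM.μ ρ {pstar} ≤ 1 := prob_le_one
    have := ENNReal.toReal_mono (by simp) hle1
    simpa using this
  show expPay PM ρ (f i) ≤ f i pstar + ε
  calc expPay PM ρ (f i) = ∫ p, f i p ∂ PM.μ ρ := rfl
    _ ≤ w * f i pstar + (1 - w) * M := hle
    _ ≤ f i pstar + ε := by
        rw [hM]
        nlinarith [hε, hw0, hw1]


end Blackwell
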